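/- Let η : ℤ² → ℝ satisfy (H₀): inf_n η(n) > −1 and η(n) → 0 as |n| → ∞, set m := 1 + η, and let V : ℤ² → ℝ be bounded with V(n) → 0 as |n| → ∞. Then H̃ := Δ̃ + V(Q) is a bounded self-adjoint operator on ℓ²(ℤ²,ℂ), and H̃ − Δ_T is a compact operator. -/

import Mathlib

open scoped ENNReal
open Filter

noncomputable section

/-- The Hilbert space `ℓ²(ℤ², ℂ)`. -/
abbrev H2 : Type := lp (fun _ : ℤ × ℤ => ℂ) 2

/-- The triangular-lattice Laplacian, acting pointwise on functions `ℤ² → ℂ`. -/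
def lapT (f : ℤ × ℤ → ℂ) : ℤ × ℤ → ℂ := fun n =>
  (1/6 : ℂ) * (f (n.1 + 1, n.2) + f (n.1 - 1, n.2) + f (n.1, n.2 + 1)
    + f (n.1, n.2 - 1) + f (n.1 + 1, n.2 - 1) + f (n.1 - 1, n.2 + 1))

/-- The symbol `F(x₁,x₂) = (1/3)(cos x₁ + cos x₂ + cos (x₁ - x₂))`. -/
def symbF (x : ℝ × ℝ) : ℝ := (1/3) * (Real.cos x.1 + Real.cos x.2 + Real.cos (x.1 - x.2))

/-- `∂₁ F`. -/
def d1F (x : ℝ × ℝ) : ℝ := -(1/3) * (Real.sin x.1 + Real.sin (x.1 - x.2))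

/-- `∂₂ F`. -/
def d2F (x : ℝ × ℝ) : ℝ := -(1/3) * (Real.sin x.2 - Real.sin (x.1 - x.2))

/-- Japanese bracket `⟨t⟩ = √(1/2 + t²)`. -/
def jap (t : ℝ) : ℝ := Real.sqrt (1/2 + t^2)

/-- The weight `Λ(n₁,n₂) = ⟨n₁⟩ + ⟨n₂⟩`. -/
def Lam (n : ℤ × ℤ) : ℝ := jap (n.1 : ℝ) + jap (n.2 : ℝ)

/-- The conjugate operator `A`, acting pointwise on functions `ℤ² → ℂ`. -/
def opA (f : ℤ × ℤ → ℂ) : ℤ × ℤ → ℂ := fun n =>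
  (Complex.I / 6) *
    (((n.1 : ℂ) + 1/2) * f (n.1 + 1, n.2) - ((n.1 : ℂ) - 1/2) * f (n.1 - 1, n.2)
      + ((n.2 : ℂ) + 1/2) * f (n.1, n.2 + 1) - ((n.2 : ℂ) - 1/2) * f (n.1, n.2 - 1)
      + ((n.2 : ℂ) - (n.1 : ℂ) + 1) * f (n.1 - 1, n.2 + 1)
      + ((n.1 : ℂ) - (n.2 : ℂ) + 1) * f (n.1 + 1, n.2 - 1))

/-- The perturbed Laplacian `Δ̃` with weight `m`, acting pointwise on functions `ℤ² → ℂ`: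
`(Δ̃ f)(n) = (1/6) Σ_{l ∼ n} f(l) / (√(m n) √(m l))`. -/
def lapPert (m : ℤ × ℤ → ℝ) (f : ℤ × ℤ → ℂ) : ℤ × ℤ → ℂ := fun n =>
  (1/6 : ℂ) *
    (f (n.1 + 1, n.2) / ((Real.sqrt (m n) * Real.sqrt (m (n.1 + 1, n.2)) : ℝ) : ℂ)
      + f (n.1 - 1, n.2) / ((Real.sqrt (m n) * Real.sqrt (m (n.1 - 1, n.2)) : ℝ) : ℂ)
      + f (n.1, n.2 + 1) / ((Real.sqrt (m n) * Real.sqrt (m (n.1, n.2 + 1)) : ℝ) : ℂ)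
      + f (n.1, n.2 - 1) / ((Real.sqrt (m n) * Real.sqrt (m (n.1, n.2 - 1)) : ℝ) : ℂ)
      + f (n.1 + 1, n.2 - 1) / ((Real.sqrt (m n) * Real.sqrt (m (n.1 + 1, n.2 - 1)) : ℝ) : ℂ)
      + f (n.1 - 1, n.2 + 1) / ((Real.sqrt (m n) * Real.sqrt (m (n.1 - 1, n.2 + 1)) : ℝ) : ℂ))

namespace Aux12

open Complex

local notation "⟪" x ", " y "⟫" => @inner ℂ _ _ x y

lemma two_pos' : (0:ℝ) < (2 : ℝ≥0∞).toReal := by norm_num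

lemma mem_shift (a : ℤ × ℤ → ℂ) (v : ℤ × ℤ) {C : ℝ} (ha : ∀ n, ‖a n‖ ≤ C) (f : H2) :
    Memℓp (fun n => a n * f (n + v)) 2 := by
  apply memℓp_gen
  have h1 : Summable (fun n : ℤ × ℤ => ‖f n‖ ^ ((2:ℝ≥0∞).toReal)) :=
    (lp.memℓp f).summable two_pos'
  have h2 : Summable (fun n : ℤ × ℤ => ‖f (n + v)‖ ^ ((2:ℝ≥0∞).toReal)) := by
    have := (Equiv.addRight v).summable_iff
      (f := fun n : ℤ × ℤ => ‖f n‖ ^ ((2:ℝ≥0∞).toReal))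
    exact this.mpr h1
  have hC : 0 ≤ C := le_trans (norm_nonneg _) (ha 0)
  refine Summable.of_nonneg_of_le (fun n => Real.rpow_nonneg (norm_nonneg _) _)
    (fun n => ?_) (h2.mul_left (C ^ ((2:ℝ≥0∞).toReal)))
  rw [← Real.mul_rpow hC (norm_nonneg _)]
  refine Real.rpow_le_rpow (norm_nonneg _) ?_ (by norm_num)
  rw [norm_mul]
  exact mul_le_mul_of_nonneg_right (ha n) (norm_nonneg _)

lemma norm_bound {g f : H2} {v : ℤ × ℤ} {C : ℝ} (hC : 0 ≤ C)
    (h : ∀ n, ‖g n‖ ≤ C * ‖f (n + v)‖) : ‖g‖ ≤ C * ‖f‖ := by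
  refine lp.norm_le_of_tsum_le two_pos' (mul_nonneg hC (norm_nonneg f)) ?_
  have hsum1 : Summable (fun n : ℤ × ℤ => ‖g n‖ ^ ((2:ℝ≥0∞).toReal)) :=
    (lp.memℓp g).summable two_pos'
  have h1 : Summable (fun n : ℤ × ℤ => ‖f n‖ ^ ((2:ℝ≥0∞).toReal)) :=
    (lp.memℓp f).summable two_pos'
  have h2 : Summable (fun n : ℤ × ℤ => ‖f (n + v)‖ ^ ((2:ℝ≥0∞).toReal)) :=
    ((Equiv.addRight v).summable_iff
      (f := fun n : ℤ × ℤ => ‖f n‖ ^ ((2:ℝ≥0∞).toReal))).mpr h1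
  calc ∑' n, ‖g n‖ ^ ((2:ℝ≥0∞).toReal)
      ≤ ∑' n : ℤ × ℤ, (C * ‖f (n + v)‖) ^ ((2:ℝ≥0∞).toReal) := by
        refine Summable.tsum_le_tsum (fun n => Real.rpow_le_rpow (norm_nonneg _) (h n) (by norm_num))
          hsum1 ?_
        have h3 := h2.mul_left (C ^ ((2:ℝ≥0∞).toReal))
        refine h3.congr fun n => ?_
        rw [Real.mul_rpow hC (norm_nonneg _)]
    _ = C ^ ((2:ℝ≥0∞).toReal) * ∑' n : ℤ × ℤ, ‖f (n + v)‖ ^ ((2:ℝ≥0∞).toReal) := by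
        simp_rw [Real.mul_rpow hC (norm_nonneg _)]
        exact tsum_mul_left
    _ = C ^ ((2:ℝ≥0∞).toReal) * ∑' n : ℤ × ℤ, ‖f n‖ ^ ((2:ℝ≥0∞).toReal) := by
        congr 1
        simpa using (Equiv.addRight v).tsum_eq (fun m => ‖f m‖ ^ ((2:ℝ≥0∞).toReal))
    _ = (C * ‖f‖) ^ ((2:ℝ≥0∞).toReal) := by
        rw [Real.mul_rpow hC (norm_nonneg f), lp.norm_rpow_eq_tsum two_pos']

/-- Weighted shift operator `(S f)(n) = a n * f (n + v)`. -/
def shOp (a : ℤ × ℤ → ℂ) (v : ℤ × ℤ) {C : ℝ} (ha : ∀ n, ‖a n‖ ≤ C) : H2 →L[ℂ] H2 :=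
  LinearMap.mkContinuous
    { toFun := fun f => (⟨fun n => a n * f (n + v), mem_shift a v ha f⟩ : H2)
      map_add' := fun f g => by
        apply lp.ext
        funext n
        simp only [lp.coeFn_add, Pi.add_apply]
        exact mul_add _ _ _
      map_smul' := fun c f => by
        apply lp.ext
        funext n
        simp only [lp.coeFn_smul, Pi.smul_apply, RingHom.id_apply, smul_eq_mul]
        ring }
    C
    (fun f => norm_bound (le_trans (norm_nonneg _) (ha 0)) (fun n => by
      simpa [norm_mul] using mul_le_mul_of_nonneg_right (ha n) (norm_nonneg (f (n+v)))))

@[simp] lemma shOp_apply (a : ℤ × ℤ → ℂ) (v : ℤ × ℤ) {C : ℝ} (ha : ∀ n, ‖a n‖ ≤ C)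
    (f : H2) (n : ℤ × ℤ) : shOp a v ha f n = a n * f (n + v) := rfl


lemma inner_shOp (a : ℤ × ℤ → ℂ) (v : ℤ × ℤ) {C : ℝ} (ha : ∀ n, ‖a n‖ ≤ C)
    (a' : ℤ × ℤ → ℂ) (w : ℤ × ℤ) {C' : ℝ} (ha' : ∀ n, ‖a' n‖ ≤ C')
    (hw : w = -v) (h : ∀ n, a' n = starRingEnd ℂ (a (n - v))) (f g : H2) :
    ⟪shOp a v ha f, g⟫ = ⟪f, shOp a' w ha' g⟫ := by
  subst hw
  rw [lp.inner_eq_tsum, lp.inner_eq_tsum]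
  have := (Equiv.subRight v).tsum_eq
    (fun n : ℤ × ℤ => ⟪(shOp a v ha f : H2) n, g n⟫)
  rw [← this]
  refine tsum_congr fun m => ?_
  simp only [Equiv.subRight_apply, shOp_apply, RCLike.inner_apply, map_mul, h,
    sub_add_cancel]
  ring_nf

/-- Evaluation at a point as a continuous linear functional. -/
def evalC (k : ℤ × ℤ) : H2 →L[ℂ] ℂ :=
  LinearMap.mkContinuous
    { toFun := fun f => f k
      map_add' := fun f g => by simp [lp.coeFn_add]
      map_smul' := fun c f => by simp [lp.coeFn_smul] }
    1
    (fun f => by show ‖f k‖ ≤ 1 * ‖f‖; simpa using lp.norm_apply_le_norm (by norm_num : (2:ℝ≥0∞) ≠ 0) f k)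

@[simp] lemma evalC_apply (k : ℤ × ℤ) (f : H2) : evalC k f = f k := rfl

lemma isCompactOperator_smulRight (φ : H2 →L[ℂ] ℂ) (y : H2) :
    IsCompactOperator (fun x : H2 => φ x • y) := by
  refine ⟨(fun c : ℂ => c • y) '' Metric.closedBall 0 ‖φ‖,
    (isCompact_closedBall (0:ℂ) ‖φ‖).image (by continuity), ?_⟩
  refine Filter.mem_of_superset (Metric.closedBall_mem_nhds (0:H2) one_pos) ?_
  intro x hx
  refine ⟨φ x, ?_, rfl⟩
  rw [Metric.mem_closedBall, dist_zero_right]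
  calc ‖φ x‖ ≤ ‖φ‖ * ‖x‖ := φ.le_opNorm x
    _ ≤ ‖φ‖ * 1 := by
        refine mul_le_mul_of_nonneg_left ?_ (norm_nonneg φ)
        simpa [dist_zero_right] using hx
    _ = ‖φ‖ := mul_one _

lemma isCompactOperator_finsupport (b : ℤ × ℤ → ℂ) {C : ℝ} (hb : ∀ n, ‖b n‖ ≤ C)
    (hfin : (Function.support b).Finite) :
    IsCompactOperator (⇑(shOp b (0, 0) hb)) := by
  classical
  have key : shOp b (0,0) hb =
      ∑ k ∈ hfin.toFinset, (b k • evalC k).smulRight (lp.single 2 k (1:ℂ)) := by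
    refine ContinuousLinearMap.ext fun f => ?_
    apply lp.ext
    funext n
    rw [ContinuousLinearMap.sum_apply, lp.coeFn_sum, Finset.sum_apply]
    simp only [ContinuousLinearMap.smulRight_apply, ContinuousLinearMap.smul_apply,
      evalC_apply, smul_eq_mul, shOp_apply, lp.coeFn_smul, Pi.smul_apply]
    by_cases hn : n ∈ hfin.toFinset
    · rw [Finset.sum_eq_single n]
      · simp [lp.single_apply_self, Prod.mk_zero_zero]
      · intro k _ hk
        rw [lp.single_apply_ne 2 k _ (Ne.symm hk)]
        simp
      · intro hcon; exact absurd hn hcon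
    · have hb0 : b n = 0 := by
        by_contra hne
        exact hn (hfin.mem_toFinset.mpr hne)
      rw [hb0]
      simp only [zero_mul]
      rw [Finset.sum_eq_zero]
      intro k hk
      rw [lp.single_apply_ne 2 k _ ?_]
      · simp
      · intro hnk
        subst hnk
        exact (hn hk).elim
  rw [key]
  have : ∀ s : Finset (ℤ × ℤ), IsCompactOperator
      (⇑((∑ k ∈ s, (b k • evalC k).smulRight ((lp.single 2 k (1:ℂ)) : H2)) : H2 →L[ℂ] H2)) := by
    intro s
    induction s using Finset.cons_induction with
    | empty => simpa using isCompactOperator_zero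
    | cons k s hk ih =>
      rw [Finset.sum_cons]
      have h1 : IsCompactOperator
          (⇑((b k • evalC k).smulRight ((lp.single 2 k (1:ℂ)) : H2))) := by
        exact isCompactOperator_smulRight (b k • evalC k) ((lp.single 2 k (1:ℂ)) : H2)
      have h2 := h1.add ih
      rwa [← ContinuousLinearMap.coe_add'] at h2
  exact this _


lemma isCompactOperator_mulOp (b : ℤ × ℤ → ℂ) {C : ℝ} (hb : ∀ n, ‖b n‖ ≤ C)
    (h0 : Filter.Tendsto b Filter.cofinite (nhds 0)) :
    IsCompactOperator (⇑(shOp b (0, 0) hb)) := by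
  have hC : 0 ≤ C := le_trans (norm_nonneg _) (hb 0)
  set bk : ℕ → ℤ × ℤ → ℂ := fun k n => if (1:ℝ)/(k+1) ≤ ‖b n‖ then b n else 0 with hbk_def
  have hbk : ∀ k n, ‖bk k n‖ ≤ C := by
    intro k n
    dsimp only [bk]
    split_ifs with h
    · exact hb n
    · simp only [norm_zero]; exact hC
  have hfin : ∀ k, (Function.support (bk k)).Finite := by
    intro k
    have hv : (0:ℝ) < 1/(k+1) := by positivity
    have h0n : Filter.Tendsto (fun n => ‖b n‖) Filter.cofinite (nhds 0) := by
      simpa using h0.norm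
    have hev : ∀ᶠ n in Filter.cofinite, ‖b n‖ < 1/(k+1) :=
      h0n.eventually_lt_const hv
    refine (Filter.eventually_cofinite.mp hev).subset ?_
    intro n hn
    have hne : bk k n ≠ 0 := hn
    dsimp only [bk] at hne
    by_cases h : (1:ℝ)/(k+1) ≤ ‖b n‖
    · exact not_lt.mpr h
    · rw [if_neg h] at hne
      exact absurd rfl hne
  have hdiff : ∀ k : ℕ, ‖shOp b (0,0) hb - shOp (bk k) (0,0) (hbk k)‖ ≤ 1/(k+1) := by
    intro k
    refine ContinuousLinearMap.opNorm_le_bound _ (by positivity) fun f => ?_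
    refine norm_bound (v := ((0:ℤ),(0:ℤ))) (f := f) (by positivity) fun n => ?_
    have hcoord : ((shOp b (0,0) hb - shOp (bk k) (0,0) (hbk k)) f) n
        = (b n - bk k n) * f (n + (0,0)) := by
      simp [ContinuousLinearMap.sub_apply, lp.coeFn_sub, Pi.sub_apply, sub_mul]
    rw [hcoord, norm_mul]
    refine mul_le_mul_of_nonneg_right ?_ (norm_nonneg _)
    dsimp only [bk]
    by_cases h : (1:ℝ)/(k+1) ≤ ‖b n‖
    · rw [if_pos h, sub_self, norm_zero]
      positivity
    · rw [if_neg h, sub_zero]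
      exact le_of_lt (not_le.mp h)
  have ht : Filter.Tendsto (fun k : ℕ => shOp (bk k) (0,0) (hbk k)) Filter.atTop
      (nhds (shOp b (0,0) hb)) := by
    rw [tendsto_iff_norm_sub_tendsto_zero]
    refine squeeze_zero (fun k => norm_nonneg _) (fun k => ?_)
      tendsto_one_div_add_atTop_nhds_zero_nat
    rw [norm_sub_rev]
    exact hdiff k
  exact isCompactOperator_of_tendsto ht
    (Filter.Eventually.of_forall fun k => isCompactOperator_finsupport _ (hbk k) (hfin k))


lemma coeff_tendsto (η : ℤ × ℤ → ℝ) (h0 : Filter.Tendsto η Filter.cofinite (nhds 0))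
    (v : ℤ × ℤ) :
    Filter.Tendsto
      (fun n => ((((1:ℝ)/6) / (Real.sqrt (1 + η n) * Real.sqrt (1 + η (n + v)))
        - 1/6 : ℝ) : ℂ)) Filter.cofinite (nhds 0) := by
  have hηv : Filter.Tendsto (fun n => η (n + v)) Filter.cofinite (nhds 0) :=
    h0.comp ((Equiv.addRight v).injective.tendsto_cofinite)
  have hpair : Filter.Tendsto (fun n => (η n, η (n + v))) Filter.cofinite
      (nhds ((0:ℝ), (0:ℝ))) := h0.prodMk_nhds hηv
  set G : ℝ × ℝ → ℝ := fun p => (1/6) / (Real.sqrt (1 + p.1) * Real.sqrt (1 + p.2)) - 1/6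
    with hG_def
  have hcont : ContinuousAt G ((0:ℝ), (0:ℝ)) := by
    apply ContinuousAt.sub _ continuousAt_const
    apply ContinuousAt.div continuousAt_const
    · exact ((Real.continuous_sqrt.comp (continuous_const.add continuous_fst)).mul
        (Real.continuous_sqrt.comp (continuous_const.add continuous_snd))).continuousAt
    · simp [Real.sqrt_one]
  have hG0 : G ((0:ℝ), (0:ℝ)) = 0 := by simp [G, Real.sqrt_one]
  have hreal : Filter.Tendsto (fun n => G (η n, η (n + v))) Filter.cofinite (nhds 0) := by
    have := hcont.tendsto.comp hpair
    rwa [hG0] at this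
  exact (Complex.continuous_ofReal.tendsto 0).comp hreal

end Aux12


/-- `H̃ = Δ̃ + V(Q)` is a bounded self-adjoint operator on `ℓ²(ℤ²,ℂ)`, and
`H̃ - Δ_T` is a compact operator. -/
theorem perturbed_hamiltonian_selfAdjoint_and_compact_difference (η : ℤ × ℤ → ℝ)
    (h0inf : ∃ c : ℝ, -1 < c ∧ ∀ n : ℤ × ℤ, c ≤ η n)
    (h0lim : Filter.Tendsto η Filter.cofinite (nhds 0))
    (V : ℤ × ℤ → ℝ) (hVbdd : ∃ C : ℝ, ∀ n : ℤ × ℤ, |V n| ≤ C)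
    (hV0 : Filter.Tendsto V Filter.cofinite (nhds 0)) :
    (∃ Ht : H2 →L[ℂ] H2, ∀ (f : H2) (n : ℤ × ℤ),
        Ht f n = lapPert (fun k => 1 + η k) (⇑f) n + (V n : ℂ) * f n) ∧
    ∀ Ht T : H2 →L[ℂ] H2,
      (∀ (f : H2) (n : ℤ × ℤ),
        Ht f n = lapPert (fun k => 1 + η k) (⇑f) n + (V n : ℂ) * f n) →
      (∀ (f : H2) (n : ℤ × ℤ), T f n = lapT (⇑f) n) →
      IsSelfAdjoint Ht ∧ IsCompactOperator (⇑(Ht - T)) := by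
  classical
  obtain ⟨c, hc, hηc⟩ := h0inf
  obtain ⟨CV, hCV⟩ := hVbdd
  set m : ℤ × ℤ → ℝ := fun k => 1 + η k with hm_def
  have hs : (0:ℝ) < 1 + c := by linarith
  have hm : ∀ n, 1 + c ≤ m n := fun n => by simp only [hm_def]; linarith [hηc n]
  have hsqrt : ∀ n, Real.sqrt (1 + c) ≤ Real.sqrt (m n) := fun n => Real.sqrt_le_sqrt (hm n)
  have hden : ∀ n v : ℤ × ℤ, 1 + c ≤ Real.sqrt (m n) * Real.sqrt (m (n + v)) := by
    intro n v
    calc 1 + c = Real.sqrt (1 + c) * Real.sqrt (1 + c) := (Real.mul_self_sqrt hs.le).symm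
      _ ≤ _ := mul_le_mul (hsqrt n) (hsqrt (n + v)) (Real.sqrt_nonneg _) (Real.sqrt_nonneg _)
  set Cb : ℝ := (1/6) / (1 + c) with hCb_def
  set aa : ℤ × ℤ → ℤ × ℤ → ℂ := fun v n =>
    ((((1:ℝ)/6) / (Real.sqrt (m n) * Real.sqrt (m (n + v))) : ℝ) : ℂ) with haa_def
  have hball : ∀ v n, ‖aa v n‖ ≤ Cb := by
    intro v n
    have hpos : (0:ℝ) < Real.sqrt (m n) * Real.sqrt (m (n + v)) := lt_of_lt_of_le hs (hden n v)
    simp only [haa_def, Complex.norm_real, Real.norm_eq_abs]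
    rw [abs_of_nonneg (by positivity)]
    rw [hCb_def]
    gcongr
    exact hden n v
  set aV : ℤ × ℤ → ℂ := fun n => ((V n : ℝ) : ℂ) with haV_def
  have hbV : ∀ n, ‖aV n‖ ≤ CV := fun n => by
    simp only [haV_def, Complex.norm_real, Real.norm_eq_abs]; exact hCV n
  set S : (ℤ × ℤ) → (H2 →L[ℂ] H2) := fun v => Aux12.shOp (aa v) v (hball v) with hS_def
  set MV : H2 →L[ℂ] H2 := Aux12.shOp aV (0, 0) hbV with hMV_def
  set Hc : H2 →L[ℂ] H2 :=
    S (1,0) + S (-1,0) + S (0,1) + S (0,-1) + S (1,-1) + S (-1,1) + MV with hHc_def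
  have hHc : ∀ (f : H2) (n : ℤ × ℤ), Hc f n = lapPert m (⇑f) n + (V n : ℂ) * f n := by
    intro f n
    obtain ⟨n1, n2⟩ := n
    simp only [hHc_def, hS_def, hMV_def, ContinuousLinearMap.add_apply, lp.coeFn_add,
      Pi.add_apply, Aux12.shOp_apply, lapPert, haa_def, haV_def, Prod.mk_add_mk,
      add_zero, zero_add]
    push_cast
    ring
  refine ⟨⟨Hc, hHc⟩, fun Ht T hHt hT => ?_⟩
  have hHtc : Ht = Hc := by
    refine ContinuousLinearMap.ext fun f => ?_
    apply lp.ext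
    funext n
    rw [hHt f n, hHc f n]
  have hconj : ∀ v n, aa (-v) n = (starRingEnd ℂ) (aa v (n - v)) := by
    intro v n
    simp only [haa_def, Complex.conj_ofReal]
    norm_cast
    rw [sub_add_cancel, ← sub_eq_add_neg]
    ring
  have hsym : ∀ v (f g : H2), @inner ℂ _ _ ((S v) f) g = @inner ℂ _ _ f ((S (-v)) g) := by
    intro v f g
    exact Aux12.inner_shOp (aa v) v (hball v) (aa (-v)) (-v) (hball (-v)) rfl (hconj v) f g
  constructor
  · rw [hHtc, ContinuousLinearMap.isSelfAdjoint_iff_isSymmetric]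
    intro f g
    have e1 := hsym (1,0) f g
    have e2 := hsym (-1,0) f g
    have e3 := hsym (0,1) f g
    have e4 := hsym (0,-1) f g
    have e5 := hsym (1,-1) f g
    have e6 := hsym (-1,1) f g
    have eMV : @inner ℂ _ _ (MV f) g = @inner ℂ _ _ f (MV g) := by
      refine Aux12.inner_shOp aV (0,0) hbV aV (0,0) hbV (by decide)
        (fun n => ?_) f g
      simp only [haV_def, Complex.conj_ofReal, Prod.mk_zero_zero, sub_zero]
    have hn1 : (-((1:ℤ),(0:ℤ)) : ℤ × ℤ) = (-1, 0) := by decide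
    have hn2 : (-((-1:ℤ),(0:ℤ)) : ℤ × ℤ) = (1, 0) := by decide
    have hn3 : (-((0:ℤ),(1:ℤ)) : ℤ × ℤ) = (0, -1) := by decide
    have hn4 : (-((0:ℤ),(-1:ℤ)) : ℤ × ℤ) = (0, 1) := by decide
    have hn5 : (-((1:ℤ),(-1:ℤ)) : ℤ × ℤ) = (-1, 1) := by decide
    have hn6 : (-((-1:ℤ),(1:ℤ)) : ℤ × ℤ) = (1, -1) := by decide
    rw [hn1] at e1; rw [hn2] at e2; rw [hn3] at e3; rw [hn4] at e4
    rw [hn5] at e5; rw [hn6] at e6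
    show @inner ℂ _ _ (Hc f) g = @inner ℂ _ _ f (Hc g)
    simp only [hHc_def, ContinuousLinearMap.add_apply, inner_add_left, inner_add_right]
    rw [e1, e2, e3, e4, e5, e6, eMV]
    ring
  · -- compactness of Ht - T
    set dd : ℤ × ℤ → ℤ × ℤ → ℂ := fun v n => aa v n - (1/6 : ℂ) with hdd_def
    have hddb : ∀ v n, ‖dd v n‖ ≤ Cb + 1/6 := by
      intro v n
      refine le_trans (norm_sub_le _ _) ?_
      have h6 : ‖(1/6 : ℂ)‖ = 1/6 := by norm_num
      rw [h6]
      exact add_le_add (hball v n) le_rfl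
    have hdd0 : ∀ v, Filter.Tendsto (dd v) Filter.cofinite (nhds 0) := by
      intro v
      refine (Aux12.coeff_tendsto η h0lim v).congr fun n => ?_
      simp only [hdd_def, haa_def, hm_def]
      push_cast
      ring
    have hone : ∀ n : ℤ × ℤ, ‖(fun _ : ℤ × ℤ => (1:ℂ)) n‖ ≤ 1 := fun n => by simp
    set P : ℤ × ℤ → (H2 →L[ℂ] H2) := fun v =>
      (Aux12.shOp (dd v) (0,0) (hddb v)).comp (Aux12.shOp (fun _ => (1:ℂ)) v hone)
      with hP_def
    have hPc : ∀ v, IsCompactOperator ⇑(P v) := by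
      intro v
      have h1 := (Aux12.isCompactOperator_mulOp (dd v) (hddb v) (hdd0 v)).comp_clm
        (Aux12.shOp (fun _ => (1:ℂ)) v hone)
      rwa [← ContinuousLinearMap.coe_comp'] at h1
    have hV0' : Filter.Tendsto aV Filter.cofinite (nhds 0) :=
      (Complex.continuous_ofReal.tendsto (0:ℝ)).comp hV0
    have hMVc : IsCompactOperator ⇑MV := Aux12.isCompactOperator_mulOp aV hbV hV0'
    set D : H2 →L[ℂ] H2 :=
      P (1,0) + P (-1,0) + P (0,1) + P (0,-1) + P (1,-1) + P (-1,1) + MV with hD_def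
    have hDc : IsCompactOperator ⇑D := by
      have h1 := ((((((hPc (1,0)).add (hPc (-1,0))).add (hPc (0,1))).add
        (hPc (0,-1))).add (hPc (1,-1))).add (hPc (-1,1))).add hMVc
      simpa only [← ContinuousLinearMap.coe_add'] using h1
    have hD : Ht - T = D := by
      refine ContinuousLinearMap.ext fun f => ?_
      apply lp.ext
      funext n
      have hsubc : ((Ht - T) f : ∀ _ : ℤ × ℤ, ℂ) n = Ht f n - T f n := by
        simp [ContinuousLinearMap.sub_apply, lp.coeFn_sub]
      rw [hsubc, hHt f n, hT f n]
      obtain ⟨n1, n2⟩ := n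
      simp only [hD_def, hP_def, hMV_def, hdd_def, haa_def, haV_def,
        ContinuousLinearMap.add_apply, ContinuousLinearMap.comp_apply, lp.coeFn_add,
        Pi.add_apply, Aux12.shOp_apply, lapPert, lapT, Prod.mk_add_mk, add_zero, zero_add]
      push_cast
      ring
    rw [hD]
    exact hDc
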